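/- Suppose u_0 : closure(Ω) → ℝ is Lipschitz continuous with constant K > 0 with respect to the Euclidean distance, and let u_h solve the discrete Hamilton–Jacobi equation with initial datum the restriction of u_0 to Ω_h. Then for every x ∈ Ω_h and every t ≥ 0, |∂_t u_h(x,t)| ≤ C_0, where C_0 := Σ_{j=1}^M (sup_{closure(Ω)} Φ_j⁺ + sup_{closure(Ω)} Φ_j⁻)·(exp(K·‖ν_j‖) − 1), ‖ν_j‖ being the Euclidean norm of ν_j; in particular the constant C_0 does not involve the grid size h. -/

import Mathlib

open scoped Classical BigOperators
open MeasureTheory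

noncomputable section

/-- Shift a grid point `x` by the integer vector `ν` scaled by `h`. -/
def shiftPt {N : ℕ} (h : ℝ) (x : Fin N → ℝ) (ν : Fin N → ℤ) : Fin N → ℝ :=
  fun k => x k + (ν k : ℝ) * h

/-- The state-constrained discrete Hamiltonian `H_h`. -/
def discHam {N M : ℕ} (h : ℝ) (Ωh : Finset (Fin N → ℝ)) (ν : Fin M → Fin N → ℤ)
    (Φp Φm : Fin M → (Fin N → ℝ) → ℝ) (u : (Fin N → ℝ) → ℝ) (x : Fin N → ℝ) : ℝ :=
  ∑ j : Fin M,
    ((if shiftPt h x (ν j) ∈ Ωh then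
        Φp j x * (Real.exp ((u (shiftPt h x (ν j)) - u x) / h) - 1) else 0)
      + (if shiftPt h x (-(ν j)) ∈ Ωh then
        Φm j x * (Real.exp ((u (shiftPt h x (-(ν j))) - u x) / h) - 1) else 0))

/-- `u` is a global classical solution on `[0,∞)` of the state-constrained
discrete Hamilton–Jacobi equation `∂ₜ u = H_h u` on `Ω_h` with initial datum `u0`:
for every grid point, the time slice is continuously differentiable on `[0,∞)`
(the derivative `H_h u(·,t)` depends continuously on `t`) and the equation holds. -/
def solvesDHJ {N M : ℕ} (h : ℝ) (Ωh : Finset (Fin N → ℝ)) (ν : Fin M → Fin N → ℤ)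
    (Φp Φm : Fin M → (Fin N → ℝ) → ℝ)
    (u0 : (Fin N → ℝ) → ℝ) (u : (Fin N → ℝ) → ℝ → ℝ) : Prop :=
  (∀ x ∈ Ωh, u x 0 = u0 x) ∧
  (∀ x ∈ Ωh, ∀ t ∈ Set.Ici (0:ℝ),
    HasDerivWithinAt (fun s => u x s)
      (discHam h Ωh ν Φp Φm (fun y => u y t) x) (Set.Ici 0) t) ∧
  (∀ x ∈ Ωh,
    ContinuousOn (fun t => discHam h Ωh ν Φp Φm (fun y => u y t) x) (Set.Ici 0))

lemma discHam_congr {N M : ℕ} {h : ℝ} {Ωh : Finset (Fin N → ℝ)}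
    {ν : Fin M → Fin N → ℤ} {Φp Φm : Fin M → (Fin N → ℝ) → ℝ}
    {u v : (Fin N → ℝ) → ℝ} {x : Fin N → ℝ} (hx : x ∈ Ωh)
    (huv : ∀ y ∈ Ωh, u y = v y) :
    discHam h Ωh ν Φp Φm u x = discHam h Ωh ν Φp Φm v x := by
  unfold discHam
  refine Finset.sum_congr rfl fun j _ => ?_
  congr 1
  · split_ifs with hy
    · rw [huv _ hy, huv _ hx]
    · rfl
  · split_ifs with hy
    · rw [huv _ hy, huv _ hx]
    · rfl

lemma discHam_add_const {N M : ℕ} {h : ℝ} {Ωh : Finset (Fin N → ℝ)}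
    {ν : Fin M → Fin N → ℤ} {Φp Φm : Fin M → (Fin N → ℝ) → ℝ}
    {v : (Fin N → ℝ) → ℝ} {x : Fin N → ℝ} (c : ℝ) :
    discHam h Ωh ν Φp Φm (fun y => v y + c) x = discHam h Ωh ν Φp Φm v x := by
  unfold discHam
  refine Finset.sum_congr rfl fun j _ => ?_
  congr 1 <;> · split_ifs <;> simp [add_sub_add_right_eq_sub]

lemma discHam_le_of_max {N M : ℕ} {h : ℝ} (hh : 0 < h) {Ωh : Finset (Fin N → ℝ)}
    {ν : Fin M → Fin N → ℤ} {Φp Φm : Fin M → (Fin N → ℝ) → ℝ}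
    {x : Fin N → ℝ} (hx : x ∈ Ωh)
    (hΦp : ∀ j, 0 ≤ Φp j x) (hΦm : ∀ j, 0 ≤ Φm j x)
    {v w : (Fin N → ℝ) → ℝ}
    (hmax : ∀ y ∈ Ωh, v y - w y ≤ v x - w x) :
    discHam h Ωh ν Φp Φm v x ≤ discHam h Ωh ν Φp Φm w x := by
  have key : ∀ y ∈ Ωh, ∀ Φ : ℝ, 0 ≤ Φ →
      Φ * (Real.exp ((v y - v x) / h) - 1) ≤ Φ * (Real.exp ((w y - w x) / h) - 1) := by
    intro y hy Φ hΦ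
    have h1 : v y - v x ≤ w y - w x := by have := hmax y hy; linarith
    have h2 : (v y - v x) / h ≤ (w y - w x) / h := by
      exact div_le_div_of_nonneg_right h1 hh.le
    exact mul_le_mul_of_nonneg_left (by simpa using sub_le_sub_right (Real.exp_le_exp.2 h2) 1) hΦ
  unfold discHam
  refine Finset.sum_le_sum fun j _ => add_le_add ?_ ?_ <;>
  · split_ifs with hy
    · exact key _ hy _ (by first | exact hΦp j | exact hΦm j)
    · exact le_refl 0

open Filter Set Topology in
lemma comparisonDHJ {N M : ℕ} {h : ℝ} (hh : 0 < h) {Ωh : Finset (Fin N → ℝ)}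
    {ν : Fin M → Fin N → ℤ} {Φp Φm : Fin M → (Fin N → ℝ) → ℝ}
    (hΦp : ∀ j, ∀ x ∈ Ωh, 0 ≤ Φp j x) (hΦm : ∀ j, ∀ x ∈ Ωh, 0 ≤ Φm j x)
    (f g F G : (Fin N → ℝ) → ℝ → ℝ)
    (hf : ∀ x ∈ Ωh, ∀ t ∈ Set.Ici (0:ℝ), HasDerivWithinAt (f x) (F x t) (Set.Ici 0) t)
    (hg : ∀ x ∈ Ωh, ∀ t ∈ Set.Ici (0:ℝ), HasDerivWithinAt (g x) (G x t) (Set.Ici 0) t)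
    (hF : ∀ x ∈ Ωh, ∀ t ∈ Set.Ici (0:ℝ), F x t ≤ discHam h Ωh ν Φp Φm (fun y => f y t) x)
    (hG : ∀ x ∈ Ωh, ∀ t ∈ Set.Ici (0:ℝ), discHam h Ωh ν Φp Φm (fun y => g y t) x ≤ G x t)
    (B : ℝ) (hB : ∀ x ∈ Ωh, f x 0 - g x 0 ≤ B) :
    ∀ x ∈ Ωh, ∀ t ∈ Set.Ici (0:ℝ), f x t - g x t ≤ B := by
  have main : ∀ ε > 0, ∀ t ∈ Set.Ici (0:ℝ), ∀ x ∈ Ωh, f x t - g x t ≤ B + ε * (1 + t) := by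
    intro ε hε
    by_contra hcon
    push_neg at hcon
    obtain ⟨t0, ht0, x0, hx0, hviol⟩ := hcon
    set S : Set ℝ := {t | 0 ≤ t ∧ ∃ x ∈ Ωh, B + ε * (1 + t) < f x t - g x t} with hSdef
    have hSne : S.Nonempty := ⟨t0, ht0, x0, hx0, hviol⟩
    have hSbd : BddBelow S := ⟨0, fun t ht => ht.1⟩
    set T := sInf S with hTdef
    have hT0 : 0 ≤ T := le_csInf hSne fun t ht => ht.1
    have hnotlt : ∀ t, 0 ≤ t → t < T → ∀ x ∈ Ωh, f x t - g x t ≤ B + ε * (1 + t) := by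
      intro t ht htT x hx
      by_contra hlt
      push_neg at hlt
      exact absurd (csInf_le hSbd ⟨ht, x, hx, hlt⟩) (not_le.2 htT)
    have hcont : ∀ x ∈ Ωh, ContinuousWithinAt (fun t => f x t - g x t) (Set.Ici 0) T :=
      fun x hx => ((hf x hx T hT0).continuousWithinAt).sub ((hg x hx T hT0).continuousWithinAt)
    have hbndcont : Tendsto (fun t : ℝ => B + ε * (1 + t)) (𝓝 T) (𝓝 (B + ε * (1 + T))) :=
      (continuous_const.add (continuous_const.mul (continuous_const.add continuous_id))).tendsto T
    have hTnotS : T ∉ S := by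
      intro hTS
      obtain ⟨-, x, hx, hv⟩ := hTS
      rcases eq_or_lt_of_le hT0 with hT0' | hT0'
      · have := hB x hx
        rw [← hT0'] at hv
        nlinarith
      · have hne' : (𝓝[Set.Ico 0 T] T).NeBot := by
          rw [← mem_closure_iff_nhdsWithin_neBot, closure_Ico (ne_of_lt hT0')]
          exact ⟨hT0, le_refl T⟩
        have h1 : Tendsto (fun t => f x t - g x t) (𝓝[Set.Ico 0 T] T) (𝓝 (f x T - g x T)) :=
          (hcont x hx).mono Set.Ico_subset_Ici_self
        have h2 : Tendsto (fun t : ℝ => B + ε * (1 + t)) (𝓝[Set.Ico 0 T] T) (𝓝 (B + ε * (1 + T))) :=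
          hbndcont.mono_left nhdsWithin_le_nhds
        have h3 : f x T - g x T ≤ B + ε * (1 + T) := by
          refine le_of_tendsto_of_tendsto h1 h2 ?_
          filter_upwards [self_mem_nhdsWithin] with t ht
          exact hnotlt t ht.1 ht.2 x hx
        linarith
    -- elements of S cluster to the right of T
    have hfreq : ∃ᶠ t in 𝓝[>] T, ∃ x ∈ Ωh, B + ε * (1 + t) < f x t - g x t := by
      rw [(nhdsGT_basis T).frequently_iff]
      intro u hu
      obtain ⟨t, htS, htu⟩ := exists_lt_of_csInf_lt hSne (show sInf S < u from hu)
      have htT : T < t :=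
        lt_of_le_of_ne (csInf_le hSbd htS) (by rintro rfl; exact hTnotS htS)
      exact ⟨t, ⟨htT, htu⟩, htS.2⟩
    -- pigeonhole: a single grid point works frequently
    have hstar : ∃ x ∈ Ωh, ∃ᶠ t in 𝓝[>] T, B + ε * (1 + t) < f x t - g x t := by
      by_contra hc
      push_neg at hc
      have hev : ∀ᶠ t in 𝓝[>] T, ∀ x ∈ Ωh, ¬(B + ε * (1 + t) < f x t - g x t) := by
        rw [Filter.eventually_all_finset]
        intro x hx
        exact Filter.not_frequently.1 (by simpa using hc x hx)
      obtain ⟨t, ⟨x, hx, hv⟩, hall⟩ := (hfreq.and_eventually hev).exists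
      exact hall x hx hv
    obtain ⟨xs, hxs, hfreqs⟩ := hstar
    set d : ℝ → ℝ := fun t => f xs t - g xs t with hd
    have hIoi : Set.Ioi T ⊆ Set.Ici (0:ℝ) := fun t ht => le_of_lt (lt_of_le_of_lt hT0 ht)
    have hdT : Tendsto d (𝓝[>] T) (𝓝 (d T)) := (hcont xs hxs).mono hIoi
    -- value at T is at most the barrier (T ∉ S)
    have hle : ∀ y ∈ Ωh, f y T - g y T ≤ B + ε * (1 + T) := by
      intro y hy
      by_contra hlt
      push_neg at hlt
      exact hTnotS ⟨hT0, y, hy, hlt⟩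
    -- value at T is at least the barrier by right continuity
    have hge : B + ε * (1 + T) ≤ d T := by
      by_contra hlt
      push_neg at hlt
      have h2 : Tendsto (fun t : ℝ => d t - (B + ε * (1 + t))) (𝓝[>] T)
          (𝓝 (d T - (B + ε * (1 + T)))) := hdT.sub (hbndcont.mono_left nhdsWithin_le_nhds)
      have hev : ∀ᶠ t in 𝓝[>] T, d t - (B + ε * (1 + t)) < 0 :=
        h2.eventually_lt_const (by linarith)
      obtain ⟨t, hv, hev⟩ := (hfreqs.and_eventually hev).exists
      simp only [hd] at hev
      linarith
    have hmaxT : ∀ y ∈ Ωh, f y T - g y T ≤ f xs T - g xs T := fun y hy =>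
      (hle y hy).trans hge
    -- the derivative at T is nonpositive
    have hD : F xs T - G xs T ≤ 0 := by
      have h1 := hF xs hxs T hT0
      have h2 := hG xs hxs T hT0
      have h3 := discHam_le_of_max (ν := ν) hh hxs (fun j => hΦp j xs hxs) (fun j => hΦm j xs hxs)
        (v := fun y => f y T) (w := fun y => g y T) (fun y hy => hmaxT y hy)
      linarith
    have hderiv : HasDerivWithinAt d (F xs T - G xs T) (Set.Ioi T) T :=
      ((hf xs hxs T hT0).sub (hg xs hxs T hT0)).mono hIoi
    have hslope : Tendsto (slope d T) (𝓝[>] T) (𝓝 (F xs T - G xs T)) := by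
      have := hasDerivWithinAt_iff_tendsto_slope.1 hderiv
      rwa [show Set.Ioi T \ {T} = Set.Ioi T from Set.diff_singleton_eq_self (by simp)] at this
    have hevs : ∀ᶠ t in 𝓝[>] T, slope d T t < ε :=
      hslope.eventually_lt_const (lt_of_le_of_lt hD hε)
    have hfreqslope : ∃ᶠ t in 𝓝[>] T, ε < slope d T t := by
      refine hfreqs.mp (Filter.eventually_of_mem self_mem_nhdsWithin ?_)
      intro t ht hv
      have htT : T < t := ht
      have hleT : f xs T - g xs T ≤ B + ε * (1 + T) := hle xs hxs
      rw [slope_def_field, lt_div_iff₀ (by linarith : (0:ℝ) < t - T)]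
      show ε * (t - T) < (f xs t - g xs t) - (f xs T - g xs T)
      nlinarith [hv, hleT]
    obtain ⟨t, h1, h2⟩ := (hfreqslope.and_eventually hevs).exists
    linarith
  intro x hx t ht
  by_contra hlt
  push_neg at hlt
  have h1t : (0:ℝ) < 1 + t := by simp only [Set.mem_Ici] at ht; linarith
  have hε : 0 < (f x t - g x t - B) / (2 * (1 + t)) := div_pos (by linarith) (by linarith)
  have hmain := main _ hε t ht x hx
  have heq : (f x t - g x t - B) / (2 * (1 + t)) * (1 + t) = (f x t - g x t - B) / 2 := by
    field_simp
  rw [heq] at hmain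
  linarith

open Finset in
lemma term_bound {N : ℕ} {h : ℝ} (hh : 0 < h) {Ωh : Finset (Fin N → ℝ)}
    (Ω : Set (Fin N → ℝ)) (hsub : ∀ y ∈ Ωh, y ∈ closure Ω)
    (u0 : (Fin N → ℝ) → ℝ) {K : ℝ} (hK : 0 ≤ K)
    (hLip : ∀ x ∈ closure Ω, ∀ y ∈ closure Ω,
      |u0 x - u0 y| ≤ K * Real.sqrt (∑ k, (x k - y k) ^ 2))
    {x : Fin N → ℝ} (hx : x ∈ Ωh) (μ : Fin N → ℤ) {Φ P : ℝ} (hΦ0 : 0 ≤ Φ) (hΦP : Φ ≤ P) :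
    |if shiftPt h x μ ∈ Ωh then Φ * (Real.exp ((u0 (shiftPt h x μ) - u0 x) / h) - 1) else 0|
      ≤ P * (Real.exp (K * Real.sqrt (∑ k, ((μ k : ℝ)) ^ 2)) - 1) := by
  have hP : 0 ≤ P := le_trans hΦ0 hΦP
  set c := K * Real.sqrt (∑ k, ((μ k : ℝ)) ^ 2) with hc
  have hc0 : 0 ≤ c := mul_nonneg hK (Real.sqrt_nonneg _)
  have hE0 : 0 ≤ Real.exp c - 1 := by
    have := Real.one_le_exp hc0
    linarith
  split_ifs with hy
  · set y := shiftPt h x μ with hydef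
    have hycl := hsub y hy
    have hxcl := hsub x hx
    have hdist : Real.sqrt (∑ k, (y k - x k) ^ 2)
        = h * Real.sqrt (∑ k, ((μ k : ℝ)) ^ 2) := by
      have hsum : ∑ k, (y k - x k) ^ 2 = h ^ 2 * ∑ k, ((μ k : ℝ)) ^ 2 := by
        rw [Finset.mul_sum]
        refine Finset.sum_congr rfl fun k _ => ?_
        show (x k + (μ k : ℝ) * h - x k) ^ 2 = _
        ring
      rw [hsum, Real.sqrt_mul (by positivity), Real.sqrt_sq hh.le]
    have habs : |(u0 y - u0 x) / h| ≤ c := by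
      rw [abs_div, abs_of_pos hh, div_le_iff₀ hh]
      calc |u0 y - u0 x| ≤ K * Real.sqrt (∑ k, (y k - x k) ^ 2) := hLip y hycl x hxcl
        _ = c * h := by rw [hdist, hc]; ring
    set a := (u0 y - u0 x) / h with ha
    have h1 : Real.exp a - 1 ≤ Real.exp c - 1 :=
      sub_le_sub_right (Real.exp_le_exp.2 (abs_le.1 habs).2) 1
    have h2 : -(Real.exp c - 1) ≤ Real.exp a - 1 := by
      have hA : Real.exp (-c) ≤ Real.exp a := Real.exp_le_exp.2 (abs_le.1 habs).1
      have hprod : Real.exp (-c) * Real.exp c = 1 := by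
        rw [← Real.exp_add]; simp
      nlinarith [Real.exp_pos c, sq_nonneg (Real.exp c - 1)]
    rw [abs_mul, abs_of_nonneg hΦ0]
    exact mul_le_mul hΦP (abs_le.2 ⟨h2, h1⟩) (abs_nonneg _) hP
  · simpa using mul_nonneg hP hE0

/-- For Lipschitz initial data (with respect to the Euclidean distance), the time
derivative of the solution of the discrete HJE is bounded uniformly in the grid
size `h` by the explicit constant
`C₀ = Σⱼ (sup Φⱼ⁺ + sup Φⱼ⁻)·(exp(K·‖νⱼ‖) − 1)`. -/
theorem discrete_HJE_uniform_time_derivative_bound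
    {N M : ℕ} (hN : 0 < N) (hM : 0 < M)
    (h : ℝ) (hh : 0 < h)
    (Ω : Set (Fin N → ℝ)) (hΩo : IsOpen Ω) (hΩne : Ω.Nonempty)
    (hΩbd : Bornology.IsBounded Ω)
    (hΩpos : closure Ω ⊆ {x : Fin N → ℝ | ∀ k, 0 < x k})
    (ν : Fin M → Fin N → ℤ)
    (Φp Φm : Fin M → (Fin N → ℝ) → ℝ)
    (hΦpc : ∀ j, ContinuousOn (Φp j) (closure Ω))
    (hΦmc : ∀ j, ContinuousOn (Φm j) (closure Ω))
    (hΦp0 : ∀ j, ∀ x ∈ closure Ω, 0 ≤ Φp j x)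
    (hΦm0 : ∀ j, ∀ x ∈ closure Ω, 0 ≤ Φm j x)
    (Ωh : Finset (Fin N → ℝ))
    (hΩh : ∀ x : Fin N → ℝ,
      x ∈ Ωh ↔ ((∃ i : Fin N → ℕ, ∀ k, x k = (i k : ℝ) * h) ∧ x ∈ closure Ω))
    (hne : Ωh.Nonempty)
    (u0 : (Fin N → ℝ) → ℝ) (K : ℝ) (hK : 0 < K)
    (hLip : ∀ x ∈ closure Ω, ∀ y ∈ closure Ω,
      |u0 x - u0 y| ≤ K * Real.sqrt (∑ k, (x k - y k) ^ 2))
    (u : (Fin N → ℝ) → ℝ → ℝ)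
    (hu : solvesDHJ h Ωh ν Φp Φm u0 u) :
    ∀ x ∈ Ωh, ∀ t ∈ Set.Ici (0:ℝ),
      |discHam h Ωh ν Φp Φm (fun y => u y t) x|
        ≤ ∑ j : Fin M,
            (sSup (Φp j '' closure Ω) + sSup (Φm j '' closure Ω)) *
              (Real.exp (K * Real.sqrt (∑ k, ((ν j k : ℝ)) ^ 2)) - 1) := by
  obtain ⟨hu0, huD, -⟩ := hu
  set C0 := ∑ j : Fin M, (sSup (Φp j '' closure Ω) + sSup (Φm j '' closure Ω)) *
      (Real.exp (K * Real.sqrt (∑ k, ((ν j k : ℝ)) ^ 2)) - 1) with hC0def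
  have hsub : ∀ y ∈ Ωh, y ∈ closure Ω := fun y hy => ((hΩh y).1 hy).2
  have hp' : ∀ j, ∀ z ∈ Ωh, 0 ≤ Φp j z := fun j z hz => hΦp0 j z (hsub z hz)
  have hm' : ∀ j, ∀ z ∈ Ωh, 0 ≤ Φm j z := fun j z hz => hΦm0 j z (hsub z hz)
  have hcomp : IsCompact (closure Ω) := hΩbd.isCompact_closure
  have hbddp : ∀ j, BddAbove (Φp j '' closure Ω) := fun j => hcomp.bddAbove_image (hΦpc j)
  have hbddm : ∀ j, BddAbove (Φm j '' closure Ω) := fun j => hcomp.bddAbove_image (hΦmc j)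
  -- Step 1 : uniform bound on the Hamiltonian of the initial datum
  have hH0 : ∀ y ∈ Ωh, |discHam h Ωh ν Φp Φm u0 y| ≤ C0 := by
    intro y hy
    have hycl := hsub y hy
    rw [hC0def]
    refine (Finset.abs_sum_le_sum_abs _ _).trans (Finset.sum_le_sum fun j _ => ?_)
    have hpp := term_bound hh Ω hsub u0 hK.le hLip hy (ν j) (hΦp0 j y hycl)
      (le_csSup (hbddp j) ⟨y, hycl, rfl⟩)
    have hmm := term_bound hh Ω hsub u0 hK.le hLip hy (-(ν j)) (hΦm0 j y hycl)
      (le_csSup (hbddm j) ⟨y, hycl, rfl⟩)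
    have hsq : ∑ k, (((-(ν j)) k : ℝ)) ^ 2 = ∑ k, ((ν j k : ℝ)) ^ 2 := by
      refine Finset.sum_congr rfl fun k _ => ?_
      simp only [Pi.neg_apply, Int.cast_neg, neg_sq]
    rw [hsq] at hmm
    refine le_trans (abs_add_le _ _) ?_
    rw [add_mul]
    exact add_le_add hpp hmm
  obtain ⟨x0, hx0⟩ := hne
  have hC0nn : 0 ≤ C0 := le_trans (abs_nonneg _) (hH0 x0 hx0)
  have hH0le : ∀ y ∈ Ωh, discHam h Ωh ν Φp Φm u0 y ≤ C0 := fun y hy => (abs_le.1 (hH0 y hy)).2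
  have hH0ge : ∀ y ∈ Ωh, -C0 ≤ discHam h Ωh ν Φp Φm u0 y := fun y hy => (abs_le.1 (hH0 y hy)).1
  -- Step 2a : `u(·,s) ≤ u0 + C0 s`
  have h2a : ∀ y ∈ Ωh, ∀ s ∈ Set.Ici (0:ℝ), u y s - u0 y ≤ C0 * s := by
    have hcmp := comparisonDHJ hh hp' hm' u (fun z τ => u0 z + C0 * τ)
      (fun z τ => discHam h Ωh ν Φp Φm (fun w => u w τ) z) (fun _ _ => C0)
      huD
      (fun z _ τ _ => by
        have h1 : HasDerivWithinAt (fun τ : ℝ => C0 * τ) C0 (Set.Ici 0) τ := by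
          simpa using (hasDerivWithinAt_id τ (Set.Ici 0)).const_mul C0
        exact h1.const_add (u0 z))
      (fun z hz τ hτ => le_refl _)
      (fun z hz τ hτ => by
        rw [discHam_add_const]
        exact hH0le z hz)
      0
      (fun z hz => by simp only [hu0 z hz]; simp)
    intro y hy s hs
    have h3 : u y s - (u0 y + C0 * s) ≤ 0 := hcmp y hy s hs
    linarith
  -- Step 2b : `u0 - C0 s ≤ u(·,s)`
  have h2b : ∀ y ∈ Ωh, ∀ s ∈ Set.Ici (0:ℝ), u0 y - u y s ≤ C0 * s := by
    have hcmp := comparisonDHJ hh hp' hm' (fun z τ => u0 z - C0 * τ) u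
      (fun _ _ => -C0)
      (fun z τ => discHam h Ωh ν Φp Φm (fun w => u w τ) z)
      (fun z _ τ _ => by
        show HasDerivWithinAt (fun τ : ℝ => u0 z - C0 * τ) (-C0) (Set.Ici 0) τ
        have heq : (fun τ : ℝ => u0 z - C0 * τ) = (fun τ : ℝ => u0 z + (-C0) * τ) := by
          funext τ'; ring
        rw [heq]
        have h1 : HasDerivWithinAt (fun τ : ℝ => (-C0) * τ) (-C0) (Set.Ici 0) τ := by
          simpa using (hasDerivWithinAt_id τ (Set.Ici 0)).const_mul (-C0)
        exact h1.const_add (u0 z))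
      huD
      (fun z hz τ hτ => by
        have heq : (fun w => u0 w - C0 * τ) = (fun w => u0 w + -(C0 * τ)) := by
          funext w; ring
        rw [heq, discHam_add_const]
        exact hH0ge z hz)
      (fun z hz τ hτ => le_refl _)
      0
      (fun z hz => by simp only [hu0 z hz]; simp)
    intro y hy s hs
    have h3 : u0 y - C0 * s - u y s ≤ 0 := hcmp y hy s hs
    linarith
  -- Step 2c/2d : time Lipschitz bound via comparison with the time-shifted solution
  have hshiftD : ∀ s ∈ Set.Ici (0:ℝ), ∀ z ∈ Ωh, ∀ τ ∈ Set.Ici (0:ℝ),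
      HasDerivWithinAt (fun τ' => u z (τ' + s))
        (discHam h Ωh ν Φp Φm (fun w => u w (τ + s)) z) (Set.Ici 0) τ := by
    intro s hs z hz τ hτ
    have hin := huD z hz (τ + s) (Set.mem_Ici.2 (add_nonneg hτ hs))
    have hid : HasDerivWithinAt (fun τ' : ℝ => τ' + s) 1 (Set.Ici 0) τ := by
      simpa using (hasDerivWithinAt_id τ (Set.Ici 0)).add_const s
    have hcomp2 := HasDerivWithinAt.comp τ hin hid
      (fun a (ha : a ∈ Set.Ici (0:ℝ)) => add_nonneg ha hs)
    simpa [Function.comp_def] using hcomp2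
  have h2c : ∀ s ∈ Set.Ici (0:ℝ), ∀ y ∈ Ωh, ∀ t ∈ Set.Ici (0:ℝ),
      u y (t + s) - u y t ≤ C0 * s := by
    intro s hs
    exact comparisonDHJ hh hp' hm' (fun z τ => u z (τ + s)) u
      (fun z τ => discHam h Ωh ν Φp Φm (fun w => u w (τ + s)) z)
      (fun z τ => discHam h Ωh ν Φp Φm (fun w => u w τ) z)
      (hshiftD s hs) huD (fun z hz τ hτ => le_refl _) (fun z hz τ hτ => le_refl _)
      (C0 * s)
      (fun z hz => by
        show u z (0 + s) - u z 0 ≤ C0 * s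
        rw [zero_add, hu0 z hz]
        exact h2a z hz s hs)
  have h2d : ∀ s ∈ Set.Ici (0:ℝ), ∀ y ∈ Ωh, ∀ t ∈ Set.Ici (0:ℝ),
      u y t - u y (t + s) ≤ C0 * s := by
    intro s hs
    exact comparisonDHJ hh hp' hm' u (fun z τ => u z (τ + s))
      (fun z τ => discHam h Ωh ν Φp Φm (fun w => u w τ) z)
      (fun z τ => discHam h Ωh ν Φp Φm (fun w => u w (τ + s)) z)
      huD (hshiftD s hs) (fun z hz τ hτ => le_refl _) (fun z hz τ hτ => le_refl _)
      (C0 * s)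
      (fun z hz => by
        show u z 0 - u z (0 + s) ≤ C0 * s
        rw [zero_add, hu0 z hz]
        exact h2b z hz s hs)
  -- Step 3 : bound the derivative by the time Lipschitz constant
  intro x hx t ht
  have ht0 : (0:ℝ) ≤ t := ht
  set D := discHam h Ωh ν Φp Φm (fun y => u y t) x with hDdef
  have hder : HasDerivWithinAt (u x) D (Set.Ici 0) t := huD x hx t ht
  have hIoi : Set.Ioi t ⊆ Set.Ici (0:ℝ) := fun τ hτ => le_trans ht0 (le_of_lt hτ)
  have hder2 : HasDerivWithinAt (u x) D (Set.Ioi t) t := hder.mono hIoi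
  have hslope : Filter.Tendsto (slope (u x) t) (nhdsWithin t (Set.Ioi t)) (nhds D) := by
    have h1 := hasDerivWithinAt_iff_tendsto_slope.1 hder2
    rwa [show Set.Ioi t \ {t} = Set.Ioi t from Set.diff_singleton_eq_self (by simp)] at h1
  have habs : Filter.Tendsto (fun τ => |slope (u x) t τ|) (nhdsWithin t (Set.Ioi t))
      (nhds |D|) := hslope.abs
  refine le_of_tendsto habs ?_
  filter_upwards [self_mem_nhdsWithin] with τ hτ
  have htτ : t < τ := hτ
  rw [slope_def_field, abs_div, abs_of_pos (by linarith : (0:ℝ) < τ - t),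
    div_le_iff₀ (by linarith : (0:ℝ) < τ - t)]
  have hsge : (0:ℝ) ≤ τ - t := by linarith
  have hc := h2c (τ - t) hsge x hx t ht
  have hd := h2d (τ - t) hsge x hx t ht
  rw [show t + (τ - t) = τ from by ring] at hc hd
  rw [abs_sub_le_iff]
  constructor <;> linarith
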